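/- Let μ > 0 and define, for λ ≥ 0 and x ≠ y in ℝ², R₂(λ)(x,y) := (1/(2π)) K₀( √(2μ+λ²) |x−y| ), where K₀(s) = ∫₀^∞ e^{−s cosh t} dt is the modified Bessel function of the second kind of order zero. Then there is a constant C (depending only on μ) such that for all λ ∈ (0,1] and all x ≠ y in ℝ²: |R₂(λ)(x,y)| ≤ C (1 + log⁻|x−y|) and |∂_λ^k R₂(λ)(x,y)| ≤ C for k = 1, 2. -/

import Mathlib

open MeasureTheory Real Set

noncomputable section

/-- The plane `ℝ²`. -/
abbrev Plane : Type := EuclideanSpace ℝ (Fin 2)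

/-- The modified Bessel function of the second kind of order zero,
`K₀(s) = ∫₀^∞ e^{−s cosh t} dt`. -/
def K0 (s : ℝ) : ℝ := ∫ t in Set.Ioi (0:ℝ), Real.exp (-s * Real.cosh t)

/-- `log⁻(s) = −log s` for `0 < s < 1`, and `0` otherwise. -/
def logMinus (s : ℝ) : ℝ := if 0 < s ∧ s < 1 then -Real.log s else 0


namespace R2Aux

lemma cosh_le_exp {t : ℝ} (ht : 0 ≤ t) : Real.cosh t ≤ Real.exp t := by
  rw [Real.cosh_eq]
  have h : Real.exp (-t) ≤ Real.exp t := Real.exp_le_exp.2 (by linarith)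
  linarith

lemma half_exp_le_cosh (t : ℝ) : Real.exp t / 2 ≤ Real.cosh t := by
  rw [Real.cosh_eq]
  have := (Real.exp_pos (-t)).le
  linarith

lemma self_le_exp {y : ℝ} : y ≤ Real.exp y := by
  have := Real.add_one_le_exp y; linarith

lemma mul_exp_neg_half_le_two {a : ℝ} (ha : 0 ≤ a) : a * Real.exp (-(a/2)) ≤ 2 := by
  have h : a/2 ≤ Real.exp (a/2) := self_le_exp
  rw [Real.exp_neg]
  rw [mul_inv_le_iff₀ (Real.exp_pos _)]
  linarith

lemma pow_mul_exp_le (n : ℕ) {b y : ℝ} (hb : 0 < b) (hy : 0 ≤ y) :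
    y ^ n * Real.exp (-(b * y)) ≤ ((n : ℝ) / b) ^ n := by
  rcases Nat.eq_zero_or_pos n with rfl | hn
  · simpa using Real.exp_le_one_iff.2 (neg_nonpos.2 (by positivity))
  · have hn' : (0:ℝ) < n := by exact_mod_cast hn
    have key : (b * y / n) ^ n ≤ Real.exp (b * y) := by
      calc (b*y/n)^n ≤ Real.exp (b*y/n) ^ n :=
            pow_le_pow_left₀ (by positivity) self_le_exp n
        _ = Real.exp ((n : ℝ) * (b*y/n)) := (Real.exp_nat_mul _ n).symm
        _ = Real.exp (b*y) := by rw [mul_div_cancel₀]; exact ne_of_gt hn'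
    have hyn : y ^ n = ((n:ℝ)/b)^n * (b*y/n)^n := by
      rw [← mul_pow]; congr 1; field_simp
    calc y ^ n * Real.exp (-(b*y)) = ((n:ℝ)/b)^n * ((b*y/n)^n * Real.exp (-(b*y))) := by
          rw [hyn]; ring
      _ ≤ ((n:ℝ)/b)^n * 1 := by
          refine mul_le_mul_of_nonneg_left ?_ (by positivity)
          rw [Real.exp_neg, ← div_eq_mul_inv, div_le_one (Real.exp_pos _)]
          exact key
      _ = ((n:ℝ)/b)^n := mul_one _

lemma integrableOn_coshpow {a : ℝ} (ha : 0 < a) (n : ℕ) :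
    IntegrableOn (fun t => Real.cosh t ^ n * Real.exp (-(a * Real.cosh t))) (Ioi (0:ℝ)) := by
  have hint : IntegrableOn
      (fun t => ((n:ℝ)/(a/2))^n * Real.exp (-(a/4)) * Real.exp (-(a/4) * t)) (Ioi (0:ℝ)) :=
    (exp_neg_integrableOn_Ioi 0 (by positivity)).const_mul _
  refine Integrable.mono' hint ?_ ?_
  · exact ((Real.continuous_cosh.pow n).mul
      ((continuous_const.mul Real.continuous_cosh).neg.rexp)).aestronglyMeasurable
  · filter_upwards [ae_restrict_mem measurableSet_Ioi] with t ht
    have ht' : (0:ℝ) < t := ht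
    have hc0 : (0:ℝ) ≤ Real.cosh t := (Real.cosh_pos t).le
    rw [Real.norm_eq_abs, abs_of_nonneg (by positivity)]
    have hsplit : Real.exp (-(a * Real.cosh t))
        = Real.exp (-(a/2 * Real.cosh t)) * Real.exp (-(a/2 * Real.cosh t)) := by
      rw [← Real.exp_add]; ring_nf
    have h1 : Real.cosh t ^ n * Real.exp (-(a/2 * Real.cosh t)) ≤ ((n:ℝ)/(a/2))^n :=
      pow_mul_exp_le n (by positivity) hc0
    have h2 : Real.exp (-(a/2 * Real.cosh t)) ≤ Real.exp (-(a/4)) * Real.exp (-(a/4) * t) := by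
      rw [← Real.exp_add, Real.exp_le_exp]
      have hch : Real.exp t / 2 ≤ Real.cosh t := half_exp_le_cosh t
      have het : 1 + t ≤ Real.exp t := by have := Real.add_one_le_exp t; linarith
      nlinarith
    calc Real.cosh t ^ n * Real.exp (-(a * Real.cosh t))
        = (Real.cosh t ^ n * Real.exp (-(a/2 * Real.cosh t))) * Real.exp (-(a/2 * Real.cosh t)) := by
          rw [hsplit]; ring
      _ ≤ ((n:ℝ)/(a/2))^n * (Real.exp (-(a/4)) * Real.exp (-(a/4) * t)) := by
          refine mul_le_mul h1 h2 (Real.exp_pos _).le (by positivity)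
      _ = ((n:ℝ)/(a/2))^n * Real.exp (-(a/4)) * Real.exp (-(a/4) * t) := by ring

lemma integrableOn_exppow {b : ℝ} (hb : 0 < b) (n : ℕ) :
    IntegrableOn (fun t => Real.exp t ^ n * Real.exp (-(b * Real.exp t))) (Ioi (0:ℝ)) := by
  have hint : IntegrableOn
      (fun t => ((n:ℝ)/(b/2))^n * Real.exp (-(b/2)) * Real.exp (-(b/2) * t)) (Ioi (0:ℝ)) :=
    (exp_neg_integrableOn_Ioi 0 (by positivity)).const_mul _
  refine Integrable.mono' hint ?_ ?_
  · exact ((Real.continuous_exp.pow n).mul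
      ((continuous_const.mul Real.continuous_exp).neg.rexp)).aestronglyMeasurable
  · filter_upwards [ae_restrict_mem measurableSet_Ioi] with t ht
    have ht' : (0:ℝ) < t := ht
    have he0 : (0:ℝ) ≤ Real.exp t := (Real.exp_pos t).le
    rw [Real.norm_eq_abs, abs_of_nonneg (by positivity)]
    have hsplit : Real.exp (-(b * Real.exp t))
        = Real.exp (-(b/2 * Real.exp t)) * Real.exp (-(b/2 * Real.exp t)) := by
      rw [← Real.exp_add]; ring_nf
    have h1 : Real.exp t ^ n * Real.exp (-(b/2 * Real.exp t)) ≤ ((n:ℝ)/(b/2))^n :=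
      pow_mul_exp_le n (by positivity) he0
    have h2 : Real.exp (-(b/2 * Real.exp t)) ≤ Real.exp (-(b/2)) * Real.exp (-(b/2) * t) := by
      rw [← Real.exp_add, Real.exp_le_exp]
      have het : 1 + t ≤ Real.exp t := by have := Real.add_one_le_exp t; linarith
      nlinarith
    calc Real.exp t ^ n * Real.exp (-(b * Real.exp t))
        = (Real.exp t ^ n * Real.exp (-(b/2 * Real.exp t))) * Real.exp (-(b/2 * Real.exp t)) := by
          rw [hsplit]; ring
      _ ≤ ((n:ℝ)/(b/2))^n * (Real.exp (-(b/2)) * Real.exp (-(b/2) * t)) := by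
          refine mul_le_mul h1 h2 (Real.exp_pos _).le (by positivity)
      _ = ((n:ℝ)/(b/2))^n * Real.exp (-(b/2)) * Real.exp (-(b/2) * t) := by ring

lemma tendsto_mul_exp_neg {c : ℝ} (hc : 0 < c) :
    Filter.Tendsto (fun t => Real.exp t * Real.exp (-(c * Real.exp t)))
      Filter.atTop (nhds 0) := by
  have h1 : Filter.Tendsto (fun z : ℝ => z * Real.exp (-z)) Filter.atTop (nhds 0) := by
    simpa using tendsto_pow_mul_exp_neg_atTop_nhds_zero 1
  have h2 : Filter.Tendsto (fun t : ℝ => c * Real.exp t) Filter.atTop Filter.atTop :=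
    (Real.tendsto_exp_atTop).const_mul_atTop hc
  have h3 := (h1.comp h2).const_mul (1/c)
  rw [mul_zero] at h3
  refine h3.congr fun t => ?_
  simp only [Function.comp]
  field_simp

lemma tendsto_exp_neg_exp {c : ℝ} (hc : 0 < c) :
    Filter.Tendsto (fun t => Real.exp (-(c * Real.exp t))) Filter.atTop (nhds 0) := by
  have h2 : Filter.Tendsto (fun t : ℝ => -(c * Real.exp t)) Filter.atTop Filter.atBot :=
    Filter.tendsto_neg_atBot_iff.mpr (Real.tendsto_exp_atTop.const_mul_atTop hc)
  exact Real.tendsto_exp_atBot.comp h2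

lemma integral_exp_exp_one {b : ℝ} (hb : 0 < b) :
    ∫ t in Ioi (0:ℝ), Real.exp t * Real.exp (-(b * Real.exp t)) = Real.exp (-b) / b := by
  have hderiv : ∀ x ∈ Ici (0:ℝ),
      HasDerivAt (fun t => -(1/b) * Real.exp (-(b * Real.exp t)))
        (Real.exp x * Real.exp (-(b * Real.exp x))) x := by
    intro x _
    have h1 : HasDerivAt (fun t : ℝ => -(b * Real.exp t)) (-(b * Real.exp x)) x :=
      ((Real.hasDerivAt_exp x).const_mul b).neg
    have h2 := (h1.exp).const_mul (-(1/b))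
    refine h2.congr_deriv ?_
    field_simp
  have hint : IntegrableOn (fun t => Real.exp t * Real.exp (-(b * Real.exp t))) (Ioi (0:ℝ)) := by
    have := integrableOn_exppow hb 1
    simpa using this
  have htend : Filter.Tendsto (fun t => -(1/b) * Real.exp (-(b * Real.exp t)))
      Filter.atTop (nhds 0) := by
    have := (tendsto_exp_neg_exp hb).const_mul (-(1/b))
    simpa using this
  have := integral_Ioi_of_hasDerivAt_of_tendsto' hderiv hint htend
  rw [this]
  simp only [Real.exp_zero, mul_one, zero_sub, neg_neg, neg_mul]
  ring

lemma integral_exp_exp_two {b : ℝ} (hb : 0 < b) :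
    ∫ t in Ioi (0:ℝ), Real.exp t ^ 2 * Real.exp (-(b * Real.exp t))
      = (1/b + 1/b^2) * Real.exp (-b) := by
  have hderiv : ∀ x ∈ Ici (0:ℝ),
      HasDerivAt (fun t => -(Real.exp t / b + 1/b^2) * Real.exp (-(b * Real.exp t)))
        (Real.exp x ^ 2 * Real.exp (-(b * Real.exp x))) x := by
    intro x _
    have h1 : HasDerivAt (fun t : ℝ => -(b * Real.exp t)) (-(b * Real.exp x)) x :=
      ((Real.hasDerivAt_exp x).const_mul b).neg
    have h2 : HasDerivAt (fun t : ℝ => Real.exp (-(b * Real.exp t)))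
        (Real.exp (-(b * Real.exp x)) * (-(b * Real.exp x))) x := h1.exp
    have h3 : HasDerivAt (fun t : ℝ => -(Real.exp t / b + 1/b^2))
        (-(Real.exp x / b)) x := by
      have := ((Real.hasDerivAt_exp x).div_const b).add_const (1/b^2)
      exact this.neg
    have h4 := h3.mul h2
    refine h4.congr_deriv ?_
    field_simp
    ring
  have hint : IntegrableOn (fun t => Real.exp t ^ 2 * Real.exp (-(b * Real.exp t))) (Ioi (0:ℝ)) :=
    integrableOn_exppow hb 2
  have htend : Filter.Tendsto (fun t => -(Real.exp t / b + 1/b^2) * Real.exp (-(b * Real.exp t)))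
      Filter.atTop (nhds 0) := by
    have e1 := (tendsto_mul_exp_neg hb).const_mul (-(1/b))
    have e2 := (tendsto_exp_neg_exp hb).const_mul (-(1/b^2))
    have := e1.add e2
    simp only [mul_zero, add_zero] at this
    refine this.congr fun t => ?_
    ring
  have := integral_Ioi_of_hasDerivAt_of_tendsto' hderiv hint htend
  rw [this]
  simp only [Real.exp_zero, mul_one, zero_sub, neg_neg, neg_mul]


lemma phi_nonneg (a : ℝ) (n : ℕ) :
    0 ≤ ∫ t in Ioi (0:ℝ), Real.cosh t ^ n * Real.exp (-(a * Real.cosh t)) :=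
  setIntegral_nonneg measurableSet_Ioi fun t _ => by positivity

lemma Phi1_le {a : ℝ} (ha : 0 < a) :
    ∫ t in Ioi (0:ℝ), Real.cosh t * Real.exp (-(a * Real.cosh t))
      ≤ 2/a * Real.exp (-(a/2)) := by
  have hmono : ∫ t in Ioi (0:ℝ), Real.cosh t * Real.exp (-(a * Real.cosh t))
      ≤ ∫ t in Ioi (0:ℝ), Real.exp t * Real.exp (-(a/2 * Real.exp t)) := by
    refine setIntegral_mono_on ?_ ?_ measurableSet_Ioi ?_
    · simpa using integrableOn_coshpow ha 1
    · simpa using integrableOn_exppow (by positivity : (0:ℝ) < a/2) 1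
    · intro t ht
      have ht' : (0:ℝ) < t := ht
      have h1 : Real.cosh t ≤ Real.exp t := cosh_le_exp ht'.le
      have h2 : Real.exp (-(a * Real.cosh t)) ≤ Real.exp (-(a/2 * Real.exp t)) := by
        rw [Real.exp_le_exp]
        have := half_exp_le_cosh t
        nlinarith
      exact mul_le_mul h1 h2 (Real.exp_pos _).le (Real.exp_pos _).le
  calc _ ≤ ∫ t in Ioi (0:ℝ), Real.exp t * Real.exp (-(a/2 * Real.exp t)) := hmono
    _ = Real.exp (-(a/2)) / (a/2) := integral_exp_exp_one (by positivity)
    _ = 2/a * Real.exp (-(a/2)) := by field_simp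

lemma Phi2_le {a : ℝ} (ha : 0 < a) :
    ∫ t in Ioi (0:ℝ), Real.cosh t ^ 2 * Real.exp (-(a * Real.cosh t))
      ≤ (2/a + 4/a^2) * Real.exp (-(a/2)) := by
  have hmono : ∫ t in Ioi (0:ℝ), Real.cosh t ^ 2 * Real.exp (-(a * Real.cosh t))
      ≤ ∫ t in Ioi (0:ℝ), Real.exp t ^ 2 * Real.exp (-(a/2 * Real.exp t)) := by
    refine setIntegral_mono_on ?_ ?_ measurableSet_Ioi ?_
    · exact integrableOn_coshpow ha 2
    · exact integrableOn_exppow (by positivity : (0:ℝ) < a/2) 2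
    · intro t ht
      have ht' : (0:ℝ) < t := ht
      have h1 : Real.cosh t ^ 2 ≤ Real.exp t ^ 2 :=
        pow_le_pow_left₀ (Real.cosh_pos t).le (cosh_le_exp ht'.le) 2
      have h2 : Real.exp (-(a * Real.cosh t)) ≤ Real.exp (-(a/2 * Real.exp t)) := by
        rw [Real.exp_le_exp]
        have := half_exp_le_cosh t
        nlinarith
      exact mul_le_mul h1 h2 (Real.exp_pos _).le (by positivity)
  calc _ ≤ ∫ t in Ioi (0:ℝ), Real.exp t ^ 2 * Real.exp (-(a/2 * Real.exp t)) := hmono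
    _ = (1/(a/2) + 1/(a/2)^2) * Real.exp (-(a/2)) := integral_exp_exp_two (by positivity)
    _ = (2/a + 4/a^2) * Real.exp (-(a/2)) := by
        have hane : a ≠ 0 := ne_of_gt ha
        have : 1/(a/2) + 1/(a/2)^2 = 2/a + 4/a^2 := by
          rw [div_add_div _ _ (by positivity) (by positivity),
              div_add_div _ _ hane (by positivity : a^2 ≠ 0), div_eq_div_iff (by positivity) (by positivity)]
          ring
        rw [this]

lemma Phi0_le {a : ℝ} (ha : 0 < a) :
    ∫ t in Ioi (0:ℝ), Real.exp (-(a * Real.cosh t))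
      ≤ 1 + max 0 (Real.log (2/a)) := by
  set T := max 0 (Real.log (2/a)) with hTdef
  have hT : 0 ≤ T := le_max_left _ _
  have heT : 2/a ≤ Real.exp T :=
    calc 2/a = Real.exp (Real.log (2/a)) := (Real.exp_log (by positivity)).symm
      _ ≤ Real.exp T := Real.exp_le_exp.2 (le_max_right _ _)
  have hIoi : Ioi (0:ℝ) = Ioc 0 T ∪ Ioi T := (Ioc_union_Ioi_eq_Ioi hT).symm
  have hintfull : IntegrableOn (fun t => Real.exp (-(a * Real.cosh t))) (Ioi (0:ℝ)) := by
    simpa using integrableOn_coshpow ha 0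
  have hint1 : IntegrableOn (fun t => Real.exp (-(a * Real.cosh t))) (Ioc 0 T) :=
    hintfull.mono_set (by rw [hIoi]; exact subset_union_left)
  have hint2 : IntegrableOn (fun t => Real.exp (-(a * Real.cosh t))) (Ioi T) :=
    hintfull.mono_set (by rw [hIoi]; exact subset_union_right)
  have hsplit : ∫ t in Ioi (0:ℝ), Real.exp (-(a * Real.cosh t))
      = (∫ t in Ioc 0 T, Real.exp (-(a * Real.cosh t)))
        + ∫ t in Ioi T, Real.exp (-(a * Real.cosh t)) := by
    rw [hIoi]
    exact setIntegral_union (Ioc_disjoint_Ioi le_rfl) measurableSet_Ioi hint1 hint2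
  have hbound1 : (∫ t in Ioc 0 T, Real.exp (-(a * Real.cosh t))) ≤ T := by
    calc (∫ t in Ioc 0 T, Real.exp (-(a * Real.cosh t)))
        ≤ ∫ _t in Ioc (0:ℝ) T, (1:ℝ) := by
          refine setIntegral_mono_on hint1 (integrableOn_const ?_) measurableSet_Ioc ?_
          · rw [Real.volume_Ioc]; exact ENNReal.ofReal_lt_top.ne
          · intro t _
            exact Real.exp_le_one_iff.2 (neg_nonpos.2 (by positivity))
      _ = T := by
          simp [Real.volume_Ioc, ENNReal.toReal_ofReal hT, hT]
  have hbound2 : (∫ t in Ioi T, Real.exp (-(a * Real.cosh t))) ≤ 1 := by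
    have hptwise : ∀ t ∈ Ioi T, Real.exp (-(a * Real.cosh t))
        ≤ Real.exp (T - 1) * Real.exp (-t) := by
      intro t ht
      have ht' : T < t := ht
      rw [← Real.exp_add, Real.exp_le_exp]
      have hch : Real.exp t / 2 ≤ Real.cosh t := half_exp_le_cosh t
      have hsplit2 : Real.exp t = Real.exp T * Real.exp (t - T) := by
        rw [← Real.exp_add]; ring_nf
      have hge : 1 + (t - T) ≤ Real.exp (t - T) := by
        have := Real.add_one_le_exp (t - T); linarith
      have h2a : (0:ℝ) < 2/a := by positivity
      -- a * cosh t ≥ (a/2) * exp t = (a/2) exp T exp(t-T) ≥ 1 * (1 + (t-T))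
      have key : 1 + (t - T) ≤ a * Real.cosh t := by
        have e1 : (a/2) * Real.exp T ≥ 1 := by
          have h := mul_le_mul_of_nonneg_left heT (by positivity : (0:ℝ) ≤ a/2)
          calc (1:ℝ) = a/2 * (2/a) := by field_simp
            _ ≤ a/2 * Real.exp T := h
        have e2 : Real.exp (t - T) ≤ (a/2) * Real.exp T * Real.exp (t - T) := by
          nlinarith [Real.exp_pos (t - T)]
        calc 1 + (t - T) ≤ Real.exp (t - T) := hge
          _ ≤ (a/2) * Real.exp T * Real.exp (t - T) := e2
          _ = (a/2) * Real.exp t := by rw [hsplit2]; ring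
          _ ≤ a * Real.cosh t := by nlinarith
      linarith
    have hintexp : IntegrableOn (fun t => Real.exp (T - 1) * Real.exp (-t)) (Ioi T) := by
      have h0 : IntegrableOn (fun t : ℝ => Real.exp (-t)) (Ioi T) := by
        simpa using exp_neg_integrableOn_Ioi T one_pos
      exact h0.const_mul _
    calc (∫ t in Ioi T, Real.exp (-(a * Real.cosh t)))
        ≤ ∫ t in Ioi T, Real.exp (T - 1) * Real.exp (-t) :=
          setIntegral_mono_on hint2 hintexp measurableSet_Ioi hptwise
      _ = Real.exp (T - 1) * Real.exp (-T) := by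
          rw [MeasureTheory.integral_const_mul, integral_exp_neg_Ioi]
      _ = Real.exp (-1) := by rw [← Real.exp_add]; ring_nf
      _ ≤ 1 := Real.exp_le_one_iff.2 (by norm_num)
  rw [hsplit]
  linarith


lemma q_pos {μ : ℝ} (hμ : 0 < μ) (s : ℝ) : 0 < Real.sqrt (2*μ + s^2) :=
  Real.sqrt_pos.2 (by positivity)

lemma m_le_q {μ : ℝ} (hμ : 0 < μ) (s : ℝ) : Real.sqrt (2*μ) ≤ Real.sqrt (2*μ + s^2) :=
  Real.sqrt_le_sqrt (by nlinarith)

lemma abs_le_q {μ : ℝ} (hμ : 0 < μ) (s : ℝ) : |s| ≤ Real.sqrt (2*μ + s^2) := by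
  rw [← Real.sqrt_sq_eq_abs]
  exact Real.sqrt_le_sqrt (by nlinarith)

lemma hasDerivAt_q {μ : ℝ} (hμ : 0 < μ) (s : ℝ) :
    HasDerivAt (fun s => Real.sqrt (2*μ + s^2)) (s / Real.sqrt (2*μ + s^2)) s := by
  have h1 : HasDerivAt (fun s : ℝ => 2*μ + s^2) (2*s) s := by
    simpa using (hasDerivAt_pow 2 s).const_add (2*μ)
  have h2 := (Real.hasDerivAt_sqrt (ne_of_gt (by positivity : (0:ℝ) < 2*μ+s^2))).comp s h1
  refine h2.congr_deriv ?_
  have hq : Real.sqrt (2*μ + s^2) ≠ 0 := ne_of_gt (q_pos hμ s)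
  field_simp

lemma hasDerivAt_Phi {μ r : ℝ} (hμ : 0 < μ) (hr : 0 < r) (n : ℕ) (s₀ : ℝ) :
    HasDerivAt
      (fun s => ∫ t in Ioi (0:ℝ),
        Real.cosh t ^ n * Real.exp (-(Real.sqrt (2*μ + s^2) * r * Real.cosh t)))
      (-(s₀ / Real.sqrt (2*μ + s₀^2) * r) *
        ∫ t in Ioi (0:ℝ),
          Real.cosh t ^ (n+1) * Real.exp (-(Real.sqrt (2*μ + s₀^2) * r * Real.cosh t))) s₀ := by
  have hm : (0:ℝ) < Real.sqrt (2*μ) := Real.sqrt_pos.2 (by positivity)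
  set F : ℝ → ℝ → ℝ := fun s t =>
    Real.cosh t ^ n * Real.exp (-(Real.sqrt (2*μ + s^2) * r * Real.cosh t)) with hF
  set F' : ℝ → ℝ → ℝ := fun s t =>
    (-(s / Real.sqrt (2*μ + s^2) * r)) *
      (Real.cosh t ^ (n+1) * Real.exp (-(Real.sqrt (2*μ + s^2) * r * Real.cosh t))) with hF'
  have hmeas : ∀ x : ℝ, AEStronglyMeasurable (F x) (volume.restrict (Ioi (0:ℝ))) := by
    intro x
    exact ((Real.continuous_cosh.pow n).mul
      ((continuous_const.mul Real.continuous_cosh).neg.rexp)).aestronglyMeasurable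
  have key := hasDerivAt_integral_of_dominated_loc_of_deriv_le
    (F := F) (F' := F') (x₀ := s₀) (s := Metric.ball s₀ 1)
    (bound := fun t => r * (Real.cosh t ^ (n+1) *
      Real.exp (-(Real.sqrt (2*μ) * r * Real.cosh t))))
    (μ := volume.restrict (Ioi (0:ℝ))) (Metric.ball_mem_nhds s₀ one_pos)
    (Filter.Eventually.of_forall hmeas)
    (by
      have : IntegrableOn (fun t => Real.cosh t ^ n *
          Real.exp (-(Real.sqrt (2*μ + s₀^2) * r * Real.cosh t))) (Ioi (0:ℝ)) :=
        integrableOn_coshpow (by positivity : (0:ℝ) < Real.sqrt (2*μ + s₀^2) * r) n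
      exact this)
    (by
      exact (continuous_const.mul ((Real.continuous_cosh.pow (n+1)).mul
        ((continuous_const.mul Real.continuous_cosh).neg.rexp))).aestronglyMeasurable)
    (by
      filter_upwards [ae_restrict_mem measurableSet_Ioi] with t ht
      intro x _
      have hc0 : (0:ℝ) < Real.cosh t := Real.cosh_pos t
      have hqx : (0:ℝ) < Real.sqrt (2*μ + x^2) := q_pos hμ x
      have h1 : |x / Real.sqrt (2*μ + x^2) * r| ≤ r := by
        rw [abs_mul, abs_div, abs_of_nonneg hr.le, abs_of_nonneg hqx.le]
        have : |x| / Real.sqrt (2*μ + x^2) ≤ 1 :=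
          (div_le_one hqx).2 (abs_le_q hμ x)
        nlinarith
      have h2 : Real.exp (-(Real.sqrt (2*μ + x^2) * r * Real.cosh t))
          ≤ Real.exp (-(Real.sqrt (2*μ) * r * Real.cosh t)) := by
        rw [Real.exp_le_exp]
        have := mul_le_mul_of_nonneg_right
          (mul_le_mul_of_nonneg_right (m_le_q hμ x) hr.le) (Real.cosh_pos t).le
        linarith
      rw [hF']
      rw [Real.norm_eq_abs, abs_mul, abs_neg]
      rw [abs_of_nonneg (by positivity : (0:ℝ) ≤ Real.cosh t ^ (n+1) *
        Real.exp (-(Real.sqrt (2*μ + x^2) * r * Real.cosh t)))]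
      calc |x / Real.sqrt (2*μ + x^2) * r| *
            (Real.cosh t ^ (n+1) * Real.exp (-(Real.sqrt (2*μ + x^2) * r * Real.cosh t)))
          ≤ r * (Real.cosh t ^ (n+1) * Real.exp (-(Real.sqrt (2*μ) * r * Real.cosh t))) := by
            refine mul_le_mul h1 ?_ (by positivity) hr.le
            exact mul_le_mul_of_nonneg_left h2 (by positivity))
    (by
      exact (integrableOn_coshpow (by positivity : (0:ℝ) < Real.sqrt (2*μ) * r)
        (n+1)).const_mul r)
    (by
      filter_upwards [ae_restrict_mem measurableSet_Ioi] with t _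
      intro x _
      have hg : HasDerivAt (fun x : ℝ => -(Real.sqrt (2*μ + x^2) * r * Real.cosh t))
          (-(x / Real.sqrt (2*μ + x^2) * r * Real.cosh t)) x :=
        (((hasDerivAt_q hμ x).mul_const r).mul_const (Real.cosh t)).neg
      have hE := hg.exp
      have := hE.const_mul (Real.cosh t ^ n)
      refine this.congr_deriv ?_
      rw [hF']
      rw [pow_succ]
      ring)
  have heq : (∫ t in Ioi (0:ℝ), F' s₀ t)
      = (-(s₀ / Real.sqrt (2*μ + s₀^2) * r)) *
        ∫ t in Ioi (0:ℝ),
          Real.cosh t ^ (n+1) * Real.exp (-(Real.sqrt (2*μ + s₀^2) * r * Real.cosh t)) := by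
    rw [hF']
    exact MeasureTheory.integral_const_mul _ _
  rw [← heq]
  exact key.2


lemma logMinus_nonneg (s : ℝ) : 0 ≤ logMinus s := by
  unfold logMinus
  split_ifs with h
  · have := Real.log_neg h.1 h.2
    linarith
  · exact le_refl 0

end R2Aux

set_option maxHeartbeats 1000000 in
theorem R2_kernel_bounds (μ : ℝ) (hμ : 0 < μ) :
    ∃ C : ℝ, 0 < C ∧ ∀ l : ℝ, 0 < l → l ≤ 1 → ∀ x y : Plane, x ≠ y →
      |(1 / (2 * Real.pi)) * K0 (Real.sqrt (2 * μ + l ^ 2) * ‖x - y‖)| ≤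
        C * (1 + logMinus ‖x - y‖) ∧
      |deriv (fun s : ℝ => (1 / (2 * Real.pi)) * K0 (Real.sqrt (2 * μ + s ^ 2) * ‖x - y‖)) l| ≤
        C ∧
      |iteratedDeriv 2
          (fun s : ℝ => (1 / (2 * Real.pi)) * K0 (Real.sqrt (2 * μ + s ^ 2) * ‖x - y‖)) l| ≤
        C := by
  classical
  have hm : (0:ℝ) < Real.sqrt (2*μ) := Real.sqrt_pos.2 (by positivity)
  have hm2 : Real.sqrt (2*μ)^2 = 2*μ := Real.sq_sqrt (by positivity)
  set m := Real.sqrt (2*μ) with hmdef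
  have habs := abs_nonneg (Real.log (2/m))
  have h2m : (0:ℝ) < 2/m := div_pos two_pos hm
  have h10m : (0:ℝ) < 10/m^2 := div_pos (by norm_num) (pow_pos hm 2)
  refine ⟨1 + |Real.log (2/m)| + 2/m + 10/m^2, by linarith, ?_⟩
  intro l hl hl1 x y hxy
  have hC1 : (1:ℝ) ≤ 1 + |Real.log (2/m)| + 2/m + 10/m^2 := by linarith
  set r := ‖x - y‖ with hrdef
  have hr : 0 < r := by
    rw [hrdef]
    exact norm_pos_iff.2 (sub_ne_zero.2 hxy)
  have hQ : 0 < Real.sqrt (2*μ + l^2) := R2Aux.q_pos hμ l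
  have hmQ : m ≤ Real.sqrt (2*μ + l^2) := R2Aux.m_le_q hμ l
  have hQ2 : Real.sqrt (2*μ + l^2)^2 = 2*μ + l^2 := Real.sq_sqrt (by positivity)
  have hlQ : l ≤ Real.sqrt (2*μ + l^2) := by
    have := R2Aux.abs_le_q hμ l
    rwa [abs_of_pos hl] at this
  have hA : (0:ℝ) < Real.sqrt (2*μ + l^2) * r := by positivity
  have hmr : m * r ≤ Real.sqrt (2*μ + l^2) * r := mul_le_mul_of_nonneg_right hmQ hr.le
  have hE0 : (0:ℝ) < Real.exp (-(Real.sqrt (2*μ + l^2) * r/2)) := Real.exp_pos _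
  have hE1 : Real.exp (-(Real.sqrt (2*μ + l^2) * r/2)) ≤ 1 :=
    Real.exp_le_one_iff.2 (by nlinarith)
  have haE : (Real.sqrt (2*μ + l^2) * r) * Real.exp (-(Real.sqrt (2*μ + l^2) * r/2)) ≤ 2 :=
    R2Aux.mul_exp_neg_half_le_two hA.le
  have hc0 : (0:ℝ) < 1/(2*Real.pi) := by positivity
  have hc1 : 1/(2*Real.pi) ≤ 1 := by
    rw [div_le_one (by positivity)]
    nlinarith [Real.pi_gt_three]
  have hL := R2Aux.logMinus_nonneg r
  -- K0 facts
  have hK0eq : K0 (Real.sqrt (2*μ + l^2) * r)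
      = ∫ t in Ioi (0:ℝ), Real.exp (-(Real.sqrt (2*μ + l^2) * r * Real.cosh t)) := by
    simp only [K0, neg_mul]
  have hK0nonneg : 0 ≤ K0 (Real.sqrt (2*μ + l^2) * r) := by
    rw [hK0eq]
    exact setIntegral_nonneg measurableSet_Ioi fun t _ => (Real.exp_pos _).le
  have hK0le : K0 (Real.sqrt (2*μ + l^2) * r)
      ≤ 1 + max 0 (Real.log (2/(Real.sqrt (2*μ + l^2) * r))) := by
    rw [hK0eq]
    exact R2Aux.Phi0_le hA
  -- log comparison
  have hmax : max 0 (Real.log (2/(Real.sqrt (2*μ + l^2) * r))) ≤ |Real.log (2/m)| + logMinus r := by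
    have hlogabs := le_abs_self (Real.log (2/m))
    refine max_le (by linarith) ?_
    rcases le_or_gt 1 r with h1 | h1
    · have hma : m ≤ Real.sqrt (2*μ + l^2) * r := by nlinarith
      have h2 : 2/(Real.sqrt (2*μ + l^2) * r) ≤ 2/m :=
        div_le_div_of_nonneg_left (by norm_num) hm hma
      have h3 : logMinus r = 0 := by
        unfold logMinus
        rw [if_neg]
        push_neg
        intro _
        linarith
      have h4 := Real.log_le_log (by positivity) h2
      linarith
    · have hLm : logMinus r = -Real.log r := by
        unfold logMinus
        rw [if_pos ⟨hr, h1⟩]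
      have h2 : 2/(Real.sqrt (2*μ + l^2) * r) ≤ 2/(m * r) :=
        div_le_div_of_nonneg_left (by norm_num) (by positivity) hmr
      have h4 := Real.log_le_log (by positivity) h2
      have h5 : Real.log (2/(m*r)) = Real.log (2/m) - Real.log r := by
        rw [show 2/(m*r) = (2/m)/r by field_simp, Real.log_div (by positivity) (ne_of_gt hr)]
      rw [hLm]
      linarith
  -- derivative structure
  have hfun : (fun s : ℝ => 1/(2*Real.pi) * K0 (Real.sqrt (2*μ + s^2) * r))
      = fun s : ℝ => 1/(2*Real.pi) * ∫ t in Ioi (0:ℝ),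
          Real.cosh t ^ 0 * Real.exp (-(Real.sqrt (2*μ + s^2) * r * Real.cosh t)) := by
    funext s
    simp only [K0, pow_zero, one_mul, neg_mul]
  have hd1 : ∀ s : ℝ, HasDerivAt (fun s' : ℝ => 1/(2*Real.pi) * K0 (Real.sqrt (2*μ + s'^2) * r))
      (1/(2*Real.pi) * (-(s / Real.sqrt (2*μ + s^2) * r) *
        ∫ t in Ioi (0:ℝ),
          Real.cosh t ^ 1 * Real.exp (-(Real.sqrt (2*μ + s^2) * r * Real.cosh t)))) s := by
    intro s
    rw [hfun]
    exact HasDerivAt.const_mul _ (R2Aux.hasDerivAt_Phi hμ hr 0 s)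
  -- Phi integrals at l
  have hI1nonneg : 0 ≤ ∫ t in Ioi (0:ℝ),
      Real.cosh t ^ 1 * Real.exp (-(Real.sqrt (2*μ + l^2) * r * Real.cosh t)) :=
    R2Aux.phi_nonneg _ 1
  have hI2nonneg : 0 ≤ ∫ t in Ioi (0:ℝ),
      Real.cosh t ^ 2 * Real.exp (-(Real.sqrt (2*μ + l^2) * r * Real.cosh t)) :=
    R2Aux.phi_nonneg _ 2
  have hI1le : (∫ t in Ioi (0:ℝ),
      Real.cosh t ^ 1 * Real.exp (-(Real.sqrt (2*μ + l^2) * r * Real.cosh t)))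
      ≤ 2/(Real.sqrt (2*μ + l^2) * r) * Real.exp (-(Real.sqrt (2*μ + l^2) * r/2)) := by
    simpa only [pow_one] using R2Aux.Phi1_le hA
  have hI2le : (∫ t in Ioi (0:ℝ),
      Real.cosh t ^ 2 * Real.exp (-(Real.sqrt (2*μ + l^2) * r * Real.cosh t)))
      ≤ (2/(Real.sqrt (2*μ + l^2) * r) + 4/(Real.sqrt (2*μ + l^2) * r)^2) *
          Real.exp (-(Real.sqrt (2*μ + l^2) * r/2)) :=
    R2Aux.Phi2_le hA
  have hrI1 : r * (∫ t in Ioi (0:ℝ),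
      Real.cosh t ^ 1 * Real.exp (-(Real.sqrt (2*μ + l^2) * r * Real.cosh t))) ≤ 2/m := by
    have he : r * (2/(Real.sqrt (2*μ + l^2) * r) *
        Real.exp (-(Real.sqrt (2*μ + l^2) * r/2)))
        = 2/(Real.sqrt (2*μ + l^2)) * Real.exp (-(Real.sqrt (2*μ + l^2) * r/2)) := by
      field_simp
    have h4 : 2/(Real.sqrt (2*μ + l^2)) ≤ 2/m :=
      div_le_div_of_nonneg_left (by norm_num) hm hmQ
    have h5 : (0:ℝ) < 2/Real.sqrt (2*μ + l^2) := by positivity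
    calc r * (∫ t in Ioi (0:ℝ),
          Real.cosh t ^ 1 * Real.exp (-(Real.sqrt (2*μ + l^2) * r * Real.cosh t)))
        ≤ r * (2/(Real.sqrt (2*μ + l^2) * r) * Real.exp (-(Real.sqrt (2*μ + l^2) * r/2))) :=
          mul_le_mul_of_nonneg_left hI1le hr.le
      _ = 2/(Real.sqrt (2*μ + l^2)) * Real.exp (-(Real.sqrt (2*μ + l^2) * r/2)) := he
      _ ≤ 2/(Real.sqrt (2*μ + l^2)) := mul_le_of_le_one_right h5.le hE1
      _ ≤ 2/m := h4
  refine ⟨?_, ?_, ?_⟩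
  · -- first bound
    rw [abs_of_nonneg (by positivity)]
    have step1 : 1/(2*Real.pi) * K0 (Real.sqrt (2*μ + l^2) * r)
        ≤ K0 (Real.sqrt (2*μ + l^2) * r) := mul_le_of_le_one_left hK0nonneg hc1
    have step3 : 1 + |Real.log (2/m)| + logMinus r
        ≤ (1 + |Real.log (2/m)| + 2/m + 10/m^2) * (1 + logMinus r) := by
      have hCL : logMinus r ≤ (1 + |Real.log (2/m)| + 2/m + 10/m^2) * logMinus r :=
        le_mul_of_one_le_left hL hC1
      have expand : (1 + |Real.log (2/m)| + 2/m + 10/m^2) * (1 + logMinus r)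
          = (1 + |Real.log (2/m)| + 2/m + 10/m^2)
            + (1 + |Real.log (2/m)| + 2/m + 10/m^2) * logMinus r := by ring
      linarith
    have hmax' := hmax
    linarith
  · -- first derivative bound
    rw [(hd1 l).deriv]
    have hlQ1 : l / Real.sqrt (2*μ + l^2) ≤ 1 := (div_le_one hQ).2 hlQ
    rw [abs_mul, abs_of_pos hc0, abs_mul, abs_neg,
        abs_of_nonneg (by positivity : (0:ℝ) ≤ l / Real.sqrt (2*μ + l^2) * r),
        abs_of_nonneg hI1nonneg]
    have key : l / Real.sqrt (2*μ + l^2) * r * (∫ t in Ioi (0:ℝ),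
        Real.cosh t ^ 1 * Real.exp (-(Real.sqrt (2*μ + l^2) * r * Real.cosh t))) ≤ 2/m := by
      calc l / Real.sqrt (2*μ + l^2) * r * (∫ t in Ioi (0:ℝ),
            Real.cosh t ^ 1 * Real.exp (-(Real.sqrt (2*μ + l^2) * r * Real.cosh t)))
          ≤ 1 * (r * (∫ t in Ioi (0:ℝ),
            Real.cosh t ^ 1 * Real.exp (-(Real.sqrt (2*μ + l^2) * r * Real.cosh t)))) := by
            rw [mul_assoc]
            exact mul_le_mul_of_nonneg_right hlQ1 (by positivity)
        _ = r * (∫ t in Ioi (0:ℝ),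
            Real.cosh t ^ 1 * Real.exp (-(Real.sqrt (2*μ + l^2) * r * Real.cosh t))) := one_mul _
        _ ≤ 2/m := hrI1
    have hIpos : 0 ≤ l / Real.sqrt (2*μ + l^2) * r * (∫ t in Ioi (0:ℝ),
        Real.cosh t ^ 1 * Real.exp (-(Real.sqrt (2*μ + l^2) * r * Real.cosh t))) := by positivity
    calc 1/(2*Real.pi) * (l / Real.sqrt (2*μ + l^2) * r * (∫ t in Ioi (0:ℝ),
          Real.cosh t ^ 1 * Real.exp (-(Real.sqrt (2*μ + l^2) * r * Real.cosh t))))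
        ≤ 1 * (2/m) := mul_le_mul hc1 key hIpos zero_le_one
      _ = 2/m := one_mul _
      _ ≤ 1 + |Real.log (2/m)| + 2/m + 10/m^2 := by linarith
  · -- second derivative bound
    rw [iteratedDeriv_succ, iteratedDeriv_one]
    have hderiv_eq : deriv (fun s : ℝ => 1/(2*Real.pi) * K0 (Real.sqrt (2*μ + s^2) * r))
        = fun s : ℝ => 1/(2*Real.pi) * (-(s / Real.sqrt (2*μ + s^2) * r) *
            ∫ t in Ioi (0:ℝ),
              Real.cosh t ^ 1 * Real.exp (-(Real.sqrt (2*μ + s^2) * r * Real.cosh t))) :=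
      funext fun s => (hd1 s).deriv
    rw [hderiv_eq]
    have hu : HasDerivAt (fun s : ℝ => s / Real.sqrt (2*μ + s^2))
        ((1 * Real.sqrt (2*μ + l^2) - l * (l / Real.sqrt (2*μ + l^2))) /
          (Real.sqrt (2*μ + l^2))^2) l :=
      (hasDerivAt_id l).div (R2Aux.hasDerivAt_q hμ l) (ne_of_gt hQ)
    have hAd : HasDerivAt (fun s : ℝ => -(s / Real.sqrt (2*μ + s^2) * r))
        (-((1 * Real.sqrt (2*μ + l^2) - l * (l / Real.sqrt (2*μ + l^2))) /
          (Real.sqrt (2*μ + l^2))^2 * r)) l := (hu.mul_const r).neg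
    have hP : HasDerivAt (fun s : ℝ => ∫ t in Ioi (0:ℝ),
        Real.cosh t ^ 1 * Real.exp (-(Real.sqrt (2*μ + s^2) * r * Real.cosh t)))
        (-(l / Real.sqrt (2*μ + l^2) * r) *
          ∫ t in Ioi (0:ℝ),
            Real.cosh t ^ 2 * Real.exp (-(Real.sqrt (2*μ + l^2) * r * Real.cosh t))) l :=
      R2Aux.hasDerivAt_Phi hμ hr 1 l
    have hprod := HasDerivAt.const_mul (1/(2*Real.pi)) (hAd.mul hP)
    simp only [Pi.mul_apply] at hprod
    rw [hprod.deriv]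
    set I1 := ∫ t in Ioi (0:ℝ),
        Real.cosh t ^ 1 * Real.exp (-(Real.sqrt (2*μ + l^2) * r * Real.cosh t)) with hI1def
    set I2 := ∫ t in Ioi (0:ℝ),
        Real.cosh t ^ 2 * Real.exp (-(Real.sqrt (2*μ + l^2) * r * Real.cosh t)) with hI2def
    set Q := Real.sqrt (2*μ + l^2) with hQdef
    have hu'eq : (1 * Q - l * (l / Q)) / Q^2 = 2*μ/Q^3 := by
      have hld : l/Q*Q = l := div_mul_cancel₀ l (ne_of_gt hQ)
      have hnum : 1*Q - l*(l/Q) = 2*μ/Q := by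
        rw [eq_div_iff (ne_of_gt hQ)]
        have e : (1*Q - l*(l/Q))*Q = Q^2 - l*(l/Q*Q) := by ring
        rw [e, hld, hQ2]
        ring
      rw [hnum]
      field_simp
    have habs1 : |(-((1 * Q - l * (l / Q)) / Q^2 * r)) * I1| ≤ 2/m^2 := by
      rw [hu'eq, abs_mul, abs_neg, abs_of_nonneg hI1nonneg,
          abs_of_nonneg (by positivity : (0:ℝ) ≤ 2*μ/Q^3 * r)]
      have h1 : 2*μ/Q^3 * (r * I1) ≤ 2*μ/Q^3 * (2/m) :=
        mul_le_mul_of_nonneg_left hrI1 (by positivity)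
      have h2 : 2*μ/Q^3 * (2/m) ≤ 2/m^2 := by
        rw [div_mul_div_comm, div_le_div_iff₀ (by positivity) (by positivity)]
        have hQ3 : m^3 ≤ Q^3 := pow_le_pow_left₀ hm.le hmQ 3
        have hQ3m : m^3 * m ≤ Q^3 * m := mul_le_mul_of_nonneg_right hQ3 hm.le
        have e : 2*μ*2*m^2 = 2*(m^3*m) := by rw [← hm2]; ring
        linarith
      calc 2*μ/Q^3 * r * I1 = 2*μ/Q^3 * (r * I1) := by ring
        _ ≤ 2*μ/Q^3 * (2/m) := h1
        _ ≤ 2/m^2 := h2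
    have habs2 : |(-(l / Q * r)) * (-(l / Q * r) * I2)| ≤ 8/m^2 := by
      have hlQ1 : l / Q ≤ 1 := (div_le_one hQ).2 hlQ
      have hlQ0 : 0 ≤ l / Q := by positivity
      have e0 : (-(l / Q * r)) * (-(l / Q * r) * I2) = l / Q * r * (l / Q * r * I2) := by ring
      have e0' : (0:ℝ) ≤ l / Q * r * (l / Q * r * I2) :=
        mul_nonneg (mul_nonneg hlQ0 hr.le) (mul_nonneg (mul_nonneg hlQ0 hr.le) hI2nonneg)
      rw [e0, abs_of_nonneg e0']
      have hb1 : l / Q * r * (l / Q * r * I2) ≤ r * (r * I2) := by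
        have e2 : (l/Q)^2 ≤ 1 := by nlinarith [hlQ1, hlQ0]
        have e1 : l / Q * r * (l / Q * r * I2) = (l/Q)^2 * (r * (r * I2)) := by ring
        rw [e1]
        exact mul_le_of_le_one_left (mul_nonneg hr.le (mul_nonneg hr.le hI2nonneg)) e2
      have hb2 : r * (r * I2) ≤ 8/m^2 := by
        have h1 : r * (r * I2) ≤ r^2 * ((2/(Q*r) + 4/(Q*r)^2) * Real.exp (-(Q*r/2))) := by
          have h := mul_le_mul_of_nonneg_left hI2le (by positivity : (0:ℝ) ≤ r^2)
          calc r * (r * I2) = r^2 * I2 := by ring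
            _ ≤ r^2 * ((2/(Q*r) + 4/(Q*r)^2) * Real.exp (-(Q*r/2))) := h
        have h2 : r^2 * ((2/(Q*r) + 4/(Q*r)^2) * Real.exp (-(Q*r/2)))
            = 2*(r/(Q*r))*(r*Real.exp (-(Q*r/2))) + 4*(r/(Q*r))^2*Real.exp (-(Q*r/2)) := by
          field_simp
        have hra : r/(Q*r) ≤ 1/m := by
          rw [div_le_div_iff₀ (by positivity) hm]
          linarith [hmr]
        have hra0 : 0 ≤ r/(Q*r) := by positivity
        have hrE : r * Real.exp (-(Q*r/2)) ≤ 2/m := by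
          rw [le_div_iff₀ hm]
          have h' : (m*r)*Real.exp (-(Q*r/2)) ≤ (Q*r)*Real.exp (-(Q*r/2)) :=
            mul_le_mul_of_nonneg_right hmr hE0.le
          calc r * Real.exp (-(Q*r/2)) * m = (m*r)*Real.exp (-(Q*r/2)) := by ring
            _ ≤ (Q*r)*Real.exp (-(Q*r/2)) := h'
            _ ≤ 2 := haE
        have t1 : (r/(Q*r))*(r*Real.exp (-(Q*r/2))) ≤ 2/m^2 := by
          calc (r/(Q*r))*(r*Real.exp (-(Q*r/2))) ≤ (1/m)*(2/m) :=
              mul_le_mul hra hrE (by positivity) (by positivity)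
            _ = 2/m^2 := by ring
        have t2 : (r/(Q*r))^2 * Real.exp (-(Q*r/2)) ≤ 1/m^2 := by
          calc (r/(Q*r))^2 * Real.exp (-(Q*r/2)) ≤ (1/m)^2 * 1 :=
              mul_le_mul (pow_le_pow_left₀ hra0 hra 2) hE1 hE0.le (by positivity)
            _ = 1/m^2 := by ring
        have e3 : 2*(2/m^2) + 4*(1/m^2) = 8/m^2 := by ring
        calc r * (r * I2) ≤ r^2 * ((2/(Q*r) + 4/(Q*r)^2) * Real.exp (-(Q*r/2))) := h1
          _ = 2*((r/(Q*r))*(r*Real.exp (-(Q*r/2)))) + 4*((r/(Q*r))^2*Real.exp (-(Q*r/2))) := by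
              rw [h2]; ring
          _ ≤ 2*(2/m^2) + 4*(1/m^2) := by
              have u1 := mul_le_mul_of_nonneg_left t1 (by norm_num : (0:ℝ) ≤ 2)
              have u2 := mul_le_mul_of_nonneg_left t2 (by norm_num : (0:ℝ) ≤ 4)
              linarith
          _ = 8/m^2 := e3
      linarith
    rw [abs_mul, abs_of_pos hc0]
    have hadd := abs_add_le ((-((1 * Q - l * (l / Q)) / Q^2 * r)) * I1)
      ((-(l / Q * r)) * (-(l / Q * r) * I2))
    have esum : 2/m^2 + 8/m^2 = 10/m^2 := by ring
    have hsum : |(-((1 * Q - l * (l / Q)) / Q^2 * r)) * I1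
        + (-(l / Q * r)) * (-(l / Q * r) * I2)| ≤ 10/m^2 := by linarith
    calc 1/(2*Real.pi) * |(-((1 * Q - l * (l / Q)) / Q^2 * r)) * I1
          + (-(l / Q * r)) * (-(l / Q * r) * I2)|
        ≤ 1 * (10/m^2) := mul_le_mul hc1 hsum (abs_nonneg _) zero_le_one
      _ = 10/m^2 := one_mul _
      _ ≤ 1 + |Real.log (2/m)| + 2/m + 10/m^2 := by linarith
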